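/- Let k be an integer with 2 ≤ k ≤ v-2 and k ≡ 2 (mod 4). Let G and G' be graphs on the same vertex set V of size v such that for every k-element subset K of V, e(G|_K) and e(G'|_K) have the same parity. Then G = G'. -/

import Mathlib

/-- Number of edges of the induced subgraph of `G` on a subset `K`. -/
def edgeCountOn {V : Type*} [Fintype V] [DecidableEq V] (G : SimpleGraph V)
    [DecidableRel G.Adj] (K : Finset V) : ℕ :=
  (G.edgeFinset.filter (· ∈ K.sym2)).card

section Aux

variable {V : Type*} [Fintype V] [DecidableEq V]

/-- The symmetric difference (XOR) of two graphs. -/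
def xorGraph (G G' : SimpleGraph V) : SimpleGraph V where
  Adj a b := (G.Adj a b ∧ ¬ G'.Adj a b) ∨ (G'.Adj a b ∧ ¬ G.Adj a b)
  symm := ⟨fun a b hab => by
    rcases hab with ⟨h1, h2⟩ | ⟨h1, h2⟩
    · exact Or.inl ⟨h1.symm, fun hc => h2 hc.symm⟩
    · exact Or.inr ⟨h1.symm, fun hc => h2 hc.symm⟩⟩
  loopless := ⟨fun a hab => by
    rcases hab with ⟨h1, _⟩ | ⟨h1, _⟩
    · exact G.loopless.irrefl a h1
    · exact G'.loopless.irrefl a h1⟩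

instance xorGraph_decidable (G G' : SimpleGraph V) [DecidableRel G.Adj]
    [DecidableRel G'.Adj] : DecidableRel (xorGraph G G').Adj := fun a b =>
  inferInstanceAs (Decidable ((G.Adj a b ∧ ¬ G'.Adj a b) ∨ (G'.Adj a b ∧ ¬ G.Adj a b)))

lemma xorGraph_parity (G G' : SimpleGraph V) [DecidableRel G.Adj] [DecidableRel G'.Adj]
    (K : Finset V) :
    edgeCountOn (xorGraph G G') K % 2 = (edgeCountOn G K + edgeCountOn G' K) % 2 := by
  classical
  set A := G.edgeFinset.filter (· ∈ K.sym2) with hA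
  set B := G'.edgeFinset.filter (· ∈ K.sym2) with hB
  have hX : (xorGraph G G').edgeFinset.filter (· ∈ K.sym2) = (A ∪ B) \ (A ∩ B) := by
    ext e
    induction e with
    | _ p q =>
      simp only [hA, hB, Finset.mem_sdiff, Finset.mem_union, Finset.mem_inter,
        Finset.mem_filter, SimpleGraph.mem_edgeFinset, SimpleGraph.mem_edgeSet]
      show ((G.Adj p q ∧ ¬ G'.Adj p q) ∨ (G'.Adj p q ∧ ¬ G.Adj p q)) ∧ _ ↔ _
      tauto
  have hsub : A ∩ B ⊆ A ∪ B := (Finset.inter_subset_left).trans Finset.subset_union_left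
  have h1 : ((A ∪ B) \ (A ∩ B)).card = (A ∪ B).card - (A ∩ B).card :=
    Finset.card_sdiff_of_subset hsub
  have h2 : (A ∪ B).card + (A ∩ B).card = A.card + B.card :=
    Finset.card_union_add_card_inter A B
  have h3 : (A ∩ B).card ≤ (A ∪ B).card := Finset.card_le_card hsub
  unfold edgeCountOn
  rw [← hA, ← hB, hX, h1]
  omega

lemma edgeCountOn_insert (H : SimpleGraph V) [DecidableRel H.Adj] (a : V) (S : Finset V)
    (ha : a ∉ S) :
    edgeCountOn H (insert a S) = edgeCountOn H S + (S.filter (H.Adj a)).card := by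
  classical
  have hsplit : H.edgeFinset.filter (· ∈ (insert a S).sym2)
      = H.edgeFinset.filter (· ∈ S.sym2) ∪ (S.filter (H.Adj a)).image (fun z => s(a, z)) := by
    ext e
    induction e with
    | _ p q =>
      simp only [Finset.mem_union, Finset.mem_filter, SimpleGraph.mem_edgeFinset,
        SimpleGraph.mem_edgeSet, Finset.mk_mem_sym2_iff, Finset.mem_insert,
        Finset.mem_image]
      constructor
      · rintro ⟨hadj, rfl | hp, hq⟩
        · rcases hq with rfl | hq
          · exact (H.loopless.irrefl _ hadj).elim
          · exact Or.inr ⟨q, ⟨hq, hadj⟩, rfl⟩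
        · rcases hq with rfl | hq
          · exact Or.inr ⟨p, ⟨hp, hadj.symm⟩, Sym2.eq_swap⟩
          · exact Or.inl ⟨hadj, hp, hq⟩
      · rintro (⟨hadj, hp, hq⟩ | ⟨z, ⟨hz, hadj⟩, he⟩)
        · exact ⟨hadj, Or.inr hp, Or.inr hq⟩
        · rw [Sym2.eq_iff] at he
          rcases he with ⟨rfl, rfl⟩ | ⟨rfl, rfl⟩
          · exact ⟨hadj, Or.inl rfl, Or.inr hz⟩
          · exact ⟨hadj.symm, Or.inr hz, Or.inl rfl⟩
  have hdisj : Disjoint (H.edgeFinset.filter (· ∈ S.sym2))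
      ((S.filter (H.Adj a)).image (fun z => s(a, z))) := by
    rw [Finset.disjoint_left]
    rintro e he1 he2
    rw [Finset.mem_image] at he2
    obtain ⟨z, hz, rfl⟩ := he2
    rw [Finset.mem_filter, Finset.mk_mem_sym2_iff] at he1
    exact ha he1.2.1
  have hinj : Set.InjOn (fun z => s(a, z)) (S.filter (H.Adj a)) := by
    intro z1 h1 z2 h2 he
    simp only [Sym2.eq_iff] at he
    rcases he with ⟨-, h⟩ | ⟨h1', h2'⟩
    · exact h
    · rw [← h1', h2']
  unfold edgeCountOn
  rw [hsplit, Finset.card_union_of_disjoint hdisj, Finset.card_image_of_injOn hinj]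

lemma card_filter_powersetCard (L : Finset V) (x y : V) (hxy : x ≠ y) (hx : x ∈ L)
    (hy : y ∈ L) (k : ℕ) (hk : 2 ≤ k) :
    ((L.powersetCard k).filter (fun K => x ∈ K ∧ y ∈ K)).card = (L.card - 2).choose (k - 2) := by
  classical
  have hpair : ({x, y} : Finset V) ⊆ L := by
    intro z hz
    rcases Finset.mem_insert.1 hz with rfl | hz
    · exact hx
    · exact (Finset.mem_singleton.1 hz) ▸ hy
  have hpaircard : ({x, y} : Finset V).card = 2 := Finset.card_pair hxy
  have hLcard : (L \ {x, y}).card = L.card - 2 := by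
    rw [Finset.card_sdiff_of_subset hpair, hpaircard]
  rw [← hLcard, ← Finset.card_powersetCard]
  apply Finset.card_nbij' (fun K => K \ {x, y}) (fun K => K ∪ {x, y})
  · intro K hK
    rw [Finset.mem_coe, Finset.mem_filter, Finset.mem_powersetCard] at hK
    obtain ⟨⟨hKL, hKcard⟩, hxK, hyK⟩ := hK
    have hpairK : ({x, y} : Finset V) ⊆ K := by
      intro z hz
      rcases Finset.mem_insert.1 hz with rfl | hz
      · exact hxK
      · exact (Finset.mem_singleton.1 hz) ▸ hyK
    rw [Finset.mem_coe, Finset.mem_powersetCard]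
    exact ⟨Finset.sdiff_subset_sdiff hKL (le_refl _),
      by dsimp only; rw [Finset.card_sdiff_of_subset hpairK, hKcard, hpaircard]⟩
  · intro K hK
    rw [Finset.mem_coe, Finset.mem_powersetCard] at hK
    obtain ⟨hKL, hKcard⟩ := hK
    have hdisj : Disjoint K ({x, y} : Finset V) :=
      Finset.disjoint_of_subset_left hKL (Finset.sdiff_disjoint)
    rw [Finset.mem_coe, Finset.mem_filter, Finset.mem_powersetCard]
    refine ⟨⟨Finset.union_subset (hKL.trans (Finset.sdiff_subset)) hpair, ?_⟩,
      Finset.mem_union_right _ (Finset.mem_insert_self _ _),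
      Finset.mem_union_right _ (Finset.mem_insert_of_mem (Finset.mem_singleton_self _))⟩
    rw [Finset.card_union_of_disjoint hdisj, hKcard, hpaircard]
    omega
  · intro K hK
    rw [Finset.mem_coe, Finset.mem_filter, Finset.mem_powersetCard] at hK
    obtain ⟨⟨hKL, hKcard⟩, hxK, hyK⟩ := hK
    have hpairK : ({x, y} : Finset V) ⊆ K := by
      intro z hz
      rcases Finset.mem_insert.1 hz with rfl | hz
      · exact hxK
      · exact (Finset.mem_singleton.1 hz) ▸ hyK
    exact Finset.sdiff_union_of_subset hpairK
  · intro K hK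
    rw [Finset.mem_coe, Finset.mem_powersetCard] at hK
    have hdisj : Disjoint K ({x, y} : Finset V) :=
      Finset.disjoint_of_subset_left hK.1 (Finset.sdiff_disjoint)
    dsimp only
    rw [Finset.union_sdiff_distrib, Finset.sdiff_self, Finset.union_empty,
      Finset.sdiff_eq_self_of_disjoint hdisj]

lemma sum_edgeCountOn (H : SimpleGraph V) [DecidableRel H.Adj] (L : Finset V) (k : ℕ)
    (hk : 2 ≤ k) :
    ∑ K ∈ L.powersetCard k, edgeCountOn H K
      = (L.card - 2).choose (k - 2) * edgeCountOn H L := by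
  classical
  unfold edgeCountOn
  have swap : ∑ K ∈ L.powersetCard k, (H.edgeFinset.filter (· ∈ K.sym2)).card
      = ∑ e ∈ H.edgeFinset, ((L.powersetCard k).filter (fun K => e ∈ K.sym2)).card := by
    simp_rw [Finset.card_filter]
    rw [Finset.sum_comm]
  rw [swap, ← Finset.sum_filter_add_sum_filter_not H.edgeFinset (· ∈ L.sym2)]
  have h2 : ∀ e ∈ H.edgeFinset.filter (fun e => ¬ e ∈ L.sym2),
      ((L.powersetCard k).filter (fun K => e ∈ K.sym2)).card = 0 := by
    intro e he
    rw [Finset.mem_filter] at he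
    rw [Finset.card_eq_zero, Finset.filter_eq_empty_iff]
    intro K hK
    rw [Finset.mem_powersetCard] at hK
    exact fun hc => he.2 (Finset.sym2_mono hK.1 hc)
  have h1 : ∀ e ∈ H.edgeFinset.filter (· ∈ L.sym2),
      ((L.powersetCard k).filter (fun K => e ∈ K.sym2)).card
        = (L.card - 2).choose (k - 2) := by
    intro e he
    rw [Finset.mem_filter] at he
    obtain ⟨heE, heL⟩ := he
    induction e with
    | _ p q =>
      have hpq : p ≠ q := by
        intro hc
        exact H.not_isDiag_of_mem_edgeSet (SimpleGraph.mem_edgeFinset.1 heE)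
          (by rw [hc]; exact Sym2.mk_isDiag_iff.2 rfl)
      rw [Finset.mk_mem_sym2_iff] at heL
      have := card_filter_powersetCard L p q hpq heL.1 heL.2 k hk
      rw [← this]
      apply Finset.card_bij (fun K _ => K)  -- identity; just prove filter predicates equal
      · intro K hK
        rw [Finset.mem_filter] at hK ⊢
        exact ⟨hK.1, (Finset.mk_mem_sym2_iff).1 hK.2⟩
      · intro _ _ _ _ hEq; exact hEq
      · intro K hK
        rw [Finset.mem_filter] at hK
        exact ⟨K, Finset.mem_filter.2 ⟨hK.1, Finset.mk_mem_sym2_iff.2 hK.2⟩, rfl⟩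
  rw [Finset.sum_congr rfl h1, Finset.sum_congr rfl h2]
  simp [Finset.sum_const, mul_comm]

lemma even_sum_of_even {s : Finset (Finset V)} {f : Finset V → ℕ}
    (h : ∀ K ∈ s, Even (f K)) : Even (∑ K ∈ s, f K) :=
  Finset.sum_induction f Even (fun _ _ => Even.add) Even.zero h

end Aux

/-- If `k ≡ 2 (mod 4)`, `2 ≤ k ≤ v - 2`, and the edge counts of `G` and `G'` have the
same parity on all `k`-sets, then `G = G'`. -/
theorem graphs_eq_of_edgeCount_parity {V : Type*} [Fintype V] [DecidableEq V]
    (G G' : SimpleGraph V) [DecidableRel G.Adj] [DecidableRel G'.Adj]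
    (k : ℕ) (hk2 : 2 ≤ k) (hkv : k + 2 ≤ Fintype.card V) (hk4 : k % 4 = 2)
    (h : ∀ K : Finset V, K.card = k → edgeCountOn G K % 2 = edgeCountOn G' K % 2) :
    G = G' := by
  classical
  obtain ⟨m, hm⟩ : ∃ m, k = 4 * m + 2 := ⟨k / 4, by omega⟩
  -- Step 0: all k-sets have even xor-edge count
  have hk : ∀ K : Finset V, K.card = k → Even (edgeCountOn (xorGraph G G') K) := by
    intro K hK
    have h0 := h K hK
    have h1 := xorGraph_parity G G' K
    rw [Nat.even_iff]
    omega
  -- Step 1: all (k+1)-sets have even xor-edge count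
  have hk1 : ∀ L : Finset V, L.card = k + 1 → Even (edgeCountOn (xorGraph G G') L) := by
    intro L hL
    have hsum := sum_edgeCountOn (xorGraph G G') L k hk2
    have heven : Even (∑ K ∈ L.powersetCard k, edgeCountOn (xorGraph G G') K) := by
      apply even_sum_of_even
      intro K hK
      exact hk K (Finset.mem_powersetCard.1 hK).2
    rw [hsum, hL] at heven
    have hchoose : (k + 1 - 2).choose (k - 2) = k - 1 := by
      have : k + 1 - 2 = (k - 2) + 1 := by omega
      rw [this, Nat.choose_succ_self_right]
      omega
    rw [hchoose] at heven
    have hodd : Odd (k - 1) := by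
      rw [Nat.odd_iff]; omega
    rcases Nat.even_mul.1 heven with he | he
    · exact absurd he (Nat.not_even_iff_odd.2 hodd)
    · exact he
  -- Step 2: all (k+2)-sets have even xor-edge count
  have hk2' : ∀ L : Finset V, L.card = k + 2 → Even (edgeCountOn (xorGraph G G') L) := by
    intro L hL
    have hsum := sum_edgeCountOn (xorGraph G G') L k hk2
    have heven : Even (∑ K ∈ L.powersetCard k, edgeCountOn (xorGraph G G') K) := by
      apply even_sum_of_even
      intro K hK
      exact hk K (Finset.mem_powersetCard.1 hK).2
    rw [hsum, hL] at heven
    have hchoose : (k + 2 - 2).choose (k - 2) = k.choose 2 := by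
      have h1 : k + 2 - 2 = k := by omega
      rw [h1, ← Nat.choose_symm hk2]
    rw [hchoose] at heven
    have hodd : Odd (k.choose 2) := by
      rw [Nat.choose_two_right, hm]
      have h21 : 4 * m + 2 - 1 = 4 * m + 1 := by omega
      rw [h21]
      have : (4 * m + 2) * (4 * m + 1) = 2 * ((2 * m + 1) * (4 * m + 1)) := by ring
      rw [this, Nat.mul_div_cancel_left _ (by norm_num : 0 < 2)]
      exact Odd.mul ⟨m, by ring⟩ ⟨2 * m, by ring⟩
    rcases Nat.even_mul.1 heven with he | he
    · exact absurd he (Nat.not_even_iff_odd.2 hodd)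
    · exact he
  -- Step 3: (xorGraph G G') has no edges
  have key : ∀ a b : V, ¬ (xorGraph G G').Adj a b := by
    intro a b hab
    have hne : a ≠ b := (xorGraph G G').ne_of_adj hab
    have hcard : k ≤ (Finset.univ \ {a, b} : Finset V).card := by
      rw [Finset.card_sdiff_of_subset (Finset.subset_univ _), Finset.card_pair hne, Finset.card_univ]
      omega
    obtain ⟨K, hKsub, hKcard⟩ := Finset.exists_subset_card_eq hcard
    have haK : a ∉ K := by
      intro hc
      have := hKsub hc
      rw [Finset.mem_sdiff] at this
      exact this.2 (Finset.mem_insert_self _ _)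
    have hbK : b ∉ K := by
      intro hc
      have := hKsub hc
      rw [Finset.mem_sdiff] at this
      exact this.2 (Finset.mem_insert_of_mem (Finset.mem_singleton_self _))
    have hbK2 : a ∉ insert b K := by
      rw [Finset.mem_insert]
      push_neg
      exact ⟨hne, haK⟩
    -- counts
    have e1 := edgeCountOn_insert (xorGraph G G') a K haK
    have e2 := edgeCountOn_insert (xorGraph G G') b K hbK
    have e3 := edgeCountOn_insert (xorGraph G G') a (insert b K) hbK2
    have hfil : ((insert b K).filter ((xorGraph G G').Adj a)).card = (K.filter ((xorGraph G G').Adj a)).card + 1 := by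
      rw [Finset.filter_insert, if_pos hab, Finset.card_insert_of_notMem]
      intro hc
      exact hbK (Finset.mem_filter.1 hc).1
    have c0 : Even (edgeCountOn (xorGraph G G') K) := hk K hKcard
    have c1 : Even (edgeCountOn (xorGraph G G') (insert a K)) := by
      apply hk1
      rw [Finset.card_insert_of_notMem haK, hKcard]
    have c2 : Even (edgeCountOn (xorGraph G G') (insert b K)) := by
      apply hk1
      rw [Finset.card_insert_of_notMem hbK, hKcard]
    have c3 : Even (edgeCountOn (xorGraph G G') (insert a (insert b K))) := by
      apply hk2'
      rw [Finset.card_insert_of_notMem hbK2, Finset.card_insert_of_notMem hbK, hKcard]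
    rw [Nat.even_iff] at c0 c1 c2 c3
    omega
  -- Step 4: conclude G = G'
  ext a b
  have := key a b
  show G.Adj a b ↔ G'.Adj a b
  by_cases hG : G.Adj a b <;> by_cases hG' : G'.Adj a b <;>
    simp_all [xorGraph]
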